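/- Let S and O be finite nonempty sets. Let M = (r,p), M_I = (r_I,p_I), and M̂ = (r̂,p̂) be SMDP models over (S,O) with 0 ≤ r(s,o) ≤ Rmax, γ̄ := max_{s,o} ∑_{s'} p(s,o,s') < 1, γ̄_I := max_{s,o} ∑_{s'} p_I(s,o,s') < 1, ‖r − r_I‖_∞ ≤ ζ_R, and max_{s,o} ∑_{s'} |p(s,o,s') − p_I(s,o,s')| ≤ ζ_P. Let Q*, Q*_I be Bellman-optimal value functions for M and M_I; let π_I be greedy with respect to Q*_I and π̂ : S → O a deterministic policy; let V*(s) = max_o Q*(s,o), V*_{M_I}(s) = max_o Q*_I(s,o), and let V^{π̂}_M, V^{π̂}_{M_I}, V^{π_I}_M denote policy values in the indicated models. Assume ‖V^{π̂}_M‖_∞ ≤ Rmax/(1−γ̄) and that the estimation error satisfies ‖V*_{M_I} − V^{π̂}_{M_I}‖_∞ ≤ ε̂. Then ‖V* − V^{π̂}_M‖_∞ ≤ 5ζ_R/(1 − γ̄_I) + 4 Rmax ζ_P / ((1 − γ̄_I)(1 − γ̄)) + ε̂. -/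

import Mathlib

noncomputable def fmax {α : Type*} [Fintype α] [Nonempty α] (f : α → ℝ) : ℝ :=
  Finset.univ.sup' Finset.univ_nonempty f

lemma le_fmax {α : Type*} [Fintype α] [Nonempty α] (f : α → ℝ) (a : α) : f a ≤ fmax f :=
  Finset.le_sup' f (Finset.mem_univ a)

lemma fmax_le {α : Type*} [Fintype α] [Nonempty α] {f : α → ℝ} {c : ℝ}
    (h : ∀ a, f a ≤ c) : fmax f ≤ c :=
  Finset.sup'_le _ _ fun a _ => h a

lemma fmax_abs_nonneg {α : Type*} [Fintype α] [Nonempty α] (f : α → ℝ) :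
    0 ≤ fmax (fun a => |f a|) :=
  (abs_nonneg (f (Classical.arbitrary α))).trans (le_fmax (fun a => |f a|) (Classical.arbitrary α))

lemma abs_fmax_le {α : Type*} [Fintype α] [Nonempty α] (f : α → ℝ) :
    |fmax f| ≤ fmax (fun a => |f a|) := by
  rw [abs_le]
  constructor
  · have a := Classical.arbitrary α
    have h1 : -|f a| ≤ f a := neg_abs_le _
    have h2 : f a ≤ fmax f := le_fmax f a
    have h3 : |f a| ≤ fmax (fun a => |f a|) := le_fmax (fun a => |f a|) a
    linarith
  · exact fmax_le fun a => (le_abs_self _).trans (le_fmax (fun a => |f a|) a)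

lemma fmax_sub_fmax_le {α : Type*} [Fintype α] [Nonempty α] (f g : α → ℝ) :
    fmax f - fmax g ≤ fmax (fun a => |f a - g a|) := by
  have : fmax f ≤ fmax g + fmax (fun a => |f a - g a|) := fmax_le fun a => by
    have h1 : g a ≤ fmax g := le_fmax g a
    have h2 : f a - g a ≤ |f a - g a| := le_abs_self _
    have h3 : |f a - g a| ≤ fmax (fun a => |f a - g a|) := le_fmax (fun a => |f a - g a|) a
    linarith
  linarith

lemma abs_fmax_sub_fmax {α : Type*} [Fintype α] [Nonempty α] (f g : α → ℝ) :
    |fmax f - fmax g| ≤ fmax (fun a => |f a - g a|) := by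
  rw [abs_sub_le_iff]
  refine ⟨fmax_sub_fmax_le f g, ?_⟩
  have := fmax_sub_fmax_le g f
  simpa [abs_sub_comm] using this

lemma div_bound {D c γ : ℝ} (hγ : γ < 1) (h : D ≤ c + γ * D) : D ≤ c / (1 - γ) := by
  rw [le_div_iff₀ (by linarith)]
  nlinarith

/-- Model-difference bound for a fixed policy. -/
lemma policy_diff {S : Type*} [Fintype S] [Nonempty S]
    (rV rW : S → ℝ) (pV pW : S → S → ℝ) (V W : S → ℝ) (ζR ζP γI B : ℝ)
    (hpW : ∀ s s', 0 ≤ pW s s')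
    (hV : ∀ s, V s = rV s + ∑ s' : S, pV s s' * V s')
    (hW : ∀ s, W s = rW s + ∑ s' : S, pW s s' * W s')
    (hr : ∀ s, |rV s - rW s| ≤ ζR)
    (hpdiff : ∀ s, ∑ s' : S, |pV s s' - pW s s'| ≤ ζP)
    (hγ : ∀ s, ∑ s' : S, pW s s' ≤ γI) (hγlt : γI < 1)
    (hB : ∀ s, |V s| ≤ B) :
    fmax (fun s => |V s - W s|) ≤ (ζR + ζP * B) / (1 - γI) := by
  set D := fmax (fun s => |V s - W s|) with hD
  have hD0 : 0 ≤ D := fmax_abs_nonneg _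
  have hB0 : 0 ≤ B := (abs_nonneg _).trans (hB (Classical.arbitrary S))
  have key : D ≤ (ζR + ζP * B) + γI * D := by
    refine fmax_le fun s => ?_
    have e : V s - W s = (rV s - rW s) + (∑ s' : S, (pV s s' - pW s s') * V s')
        + ∑ s' : S, pW s s' * (V s' - W s') := by
      have h1 : ∀ s' ∈ Finset.univ, pV s s' * V s' =
          ((pV s s' - pW s s') * V s' + pW s s' * (V s' - W s')) + pW s s' * W s' :=
        fun s' _ => by ring
      rw [hV s, hW s, Finset.sum_congr rfl h1, Finset.sum_add_distrib, Finset.sum_add_distrib]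
      ring
    have h2 : |∑ s' : S, (pV s s' - pW s s') * V s'| ≤ ζP * B := by
      calc |∑ s' : S, (pV s s' - pW s s') * V s'|
          ≤ ∑ s' : S, |(pV s s' - pW s s') * V s'| := Finset.abs_sum_le_sum_abs _ _
        _ ≤ ∑ s' : S, |pV s s' - pW s s'| * B := by
            refine Finset.sum_le_sum fun s' _ => ?_
            rw [abs_mul]
            exact mul_le_mul_of_nonneg_left (hB s') (abs_nonneg _)
        _ = (∑ s' : S, |pV s s' - pW s s'|) * B := (Finset.sum_mul _ _ _).symm
        _ ≤ ζP * B := mul_le_mul_of_nonneg_right (hpdiff s) hB0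
    have h3 : |∑ s' : S, pW s s' * (V s' - W s')| ≤ γI * D := by
      calc |∑ s' : S, pW s s' * (V s' - W s')|
          ≤ ∑ s' : S, |pW s s' * (V s' - W s')| := Finset.abs_sum_le_sum_abs _ _
        _ ≤ ∑ s' : S, pW s s' * D := by
            refine Finset.sum_le_sum fun s' _ => ?_
            rw [abs_mul, abs_of_nonneg (hpW s s')]
            exact mul_le_mul_of_nonneg_left (le_fmax (fun s => |V s - W s|) s') (hpW s s')
        _ = (∑ s' : S, pW s s') * D := (Finset.sum_mul _ _ _).symm
        _ ≤ γI * D := mul_le_mul_of_nonneg_right (hγ s) hD0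
    calc |V s - W s| ≤ |rV s - rW s| + |∑ s' : S, (pV s s' - pW s s') * V s'|
          + |∑ s' : S, pW s s' * (V s' - W s')| := by
          rw [e]; exact (abs_add_le _ _).trans (add_le_add_left (abs_add_le _ _) _)
      _ ≤ ζR + ζP * B + γI * D := by
          have := hr s; linarith
  exact div_bound hγlt key

/-- Model-difference bound for optimal Q-functions. -/
lemma q_diff {S O : Type*} [Fintype S] [Fintype O] [Nonempty S] [Nonempty O]
    (rQ rW : S → O → ℝ) (pQ pW : S → O → S → ℝ) (Q W : S → O → ℝ) (ζR ζP γI B : ℝ)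
    (hpW : ∀ s o s', 0 ≤ pW s o s')
    (hQ : ∀ s o, Q s o = rQ s o + ∑ s' : S, pQ s o s' * fmax (fun o' => Q s' o'))
    (hW : ∀ s o, W s o = rW s o + ∑ s' : S, pW s o s' * fmax (fun o' => W s' o'))
    (hr : ∀ s o, |rQ s o - rW s o| ≤ ζR)
    (hpdiff : ∀ s o, ∑ s' : S, |pQ s o s' - pW s o s'| ≤ ζP)
    (hγ : ∀ s o, ∑ s' : S, pW s o s' ≤ γI) (hγlt : γI < 1)
    (hB : ∀ s, |fmax (fun o => Q s o)| ≤ B) :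
    fmax (fun so : S × O => |Q so.1 so.2 - W so.1 so.2|) ≤ (ζR + ζP * B) / (1 - γI) := by
  set D := fmax (fun so : S × O => |Q so.1 so.2 - W so.1 so.2|) with hD
  have hD0 : 0 ≤ D := fmax_abs_nonneg _
  have hB0 : 0 ≤ B := (abs_nonneg _).trans (hB (Classical.arbitrary S))
  have hVD : ∀ s', |fmax (fun o => Q s' o) - fmax (fun o => W s' o)| ≤ D := by
    intro s'
    refine (abs_fmax_sub_fmax _ _).trans (fmax_le fun o => ?_)
    exact le_fmax (fun so : S × O => |Q so.1 so.2 - W so.1 so.2|) (s', o)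
  have key : D ≤ (ζR + ζP * B) + γI * D := by
    refine fmax_le fun so => ?_
    obtain ⟨s, o⟩ := so
    have e : Q s o - W s o = (rQ s o - rW s o)
        + (∑ s' : S, (pQ s o s' - pW s o s') * fmax (fun o' => Q s' o'))
        + ∑ s' : S, pW s o s' * (fmax (fun o' => Q s' o') - fmax (fun o' => W s' o')) := by
      have h1 : ∀ s' ∈ Finset.univ, pQ s o s' * fmax (fun o' => Q s' o') =
          ((pQ s o s' - pW s o s') * fmax (fun o' => Q s' o')
            + pW s o s' * (fmax (fun o' => Q s' o') - fmax (fun o' => W s' o')))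
          + pW s o s' * fmax (fun o' => W s' o') := fun s' _ => by ring
      rw [hQ s o, hW s o, Finset.sum_congr rfl h1, Finset.sum_add_distrib,
        Finset.sum_add_distrib]
      ring
    have h2 : |∑ s' : S, (pQ s o s' - pW s o s') * fmax (fun o' => Q s' o')| ≤ ζP * B := by
      calc |∑ s' : S, (pQ s o s' - pW s o s') * fmax (fun o' => Q s' o')|
          ≤ ∑ s' : S, |(pQ s o s' - pW s o s') * fmax (fun o' => Q s' o')| :=
            Finset.abs_sum_le_sum_abs _ _
        _ ≤ ∑ s' : S, |pQ s o s' - pW s o s'| * B := by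
            refine Finset.sum_le_sum fun s' _ => ?_
            rw [abs_mul]
            exact mul_le_mul_of_nonneg_left (hB s') (abs_nonneg _)
        _ = (∑ s' : S, |pQ s o s' - pW s o s'|) * B := (Finset.sum_mul _ _ _).symm
        _ ≤ ζP * B := mul_le_mul_of_nonneg_right (hpdiff s o) hB0
    have h3 : |∑ s' : S, pW s o s' * (fmax (fun o' => Q s' o') - fmax (fun o' => W s' o'))|
        ≤ γI * D := by
      calc |∑ s' : S, pW s o s' * (fmax (fun o' => Q s' o') - fmax (fun o' => W s' o'))|
          ≤ ∑ s' : S, |pW s o s' * (fmax (fun o' => Q s' o') - fmax (fun o' => W s' o'))| :=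
            Finset.abs_sum_le_sum_abs _ _
        _ ≤ ∑ s' : S, pW s o s' * D := by
            refine Finset.sum_le_sum fun s' _ => ?_
            rw [abs_mul, abs_of_nonneg (hpW s o s')]
            exact mul_le_mul_of_nonneg_left (hVD s') (hpW s o s')
        _ = (∑ s' : S, pW s o s') * D := (Finset.sum_mul _ _ _).symm
        _ ≤ γI * D := mul_le_mul_of_nonneg_right (hγ s o) hD0
    calc |Q s o - W s o| ≤ |rQ s o - rW s o|
          + |∑ s' : S, (pQ s o s' - pW s o s') * fmax (fun o' => Q s' o')|
          + |∑ s' : S, pW s o s' * (fmax (fun o' => Q s' o') - fmax (fun o' => W s' o'))| := by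
          rw [e]; exact (abs_add_le _ _).trans (add_le_add_left (abs_add_le _ _) _)
      _ ≤ ζR + ζP * B + γI * D := by
          have := hr s o; linarith
  exact div_bound hγlt key

/-- Theorem 2 (trajectory-based planning-loss / certainty-equivalence bound),
deterministic form. -/
theorem planning_loss_bound {S O : Type*} [Fintype S] [Fintype O] [Nonempty S] [Nonempty O]
    (r rI rhat : S → O → ℝ) (p pI phat : S → O → S → ℝ)
    (Rmax γbar γbarI ζR ζP εhat : ℝ)
    (hr0 : ∀ s o, 0 ≤ r s o) (hrR : ∀ s o, r s o ≤ Rmax)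
    (hp : ∀ s o s', 0 ≤ p s o s') (hpI : ∀ s o s', 0 ≤ pI s o s')
    (hphat : ∀ s o s', 0 ≤ phat s o s')
    (hγ : γbar = fmax (fun so : S × O => ∑ s' : S, p so.1 so.2 s')) (hγlt : γbar < 1)
    (hγI : γbarI = fmax (fun so : S × O => ∑ s' : S, pI so.1 so.2 s')) (hγIlt : γbarI < 1)
    (hζR : fmax (fun so : S × O => |r so.1 so.2 - rI so.1 so.2|) ≤ ζR)
    (hζP : fmax (fun so : S × O => ∑ s' : S, |p so.1 so.2 s' - pI so.1 so.2 s'|) ≤ ζP)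
    (Qstar QI : S → O → ℝ)
    (hQstar : ∀ s o, Qstar s o = r s o + ∑ s' : S, p s o s' * fmax (fun o' => Qstar s' o'))
    (hQI : ∀ s o, QI s o = rI s o + ∑ s' : S, pI s o s' * fmax (fun o' => QI s' o'))
    (πI : S → O) (hgreedy : ∀ s, QI s (πI s) = fmax (fun o => QI s o))
    (πhat : S → O)
    (Vstar VstarMI VhatM VhatMI VπIM : S → ℝ)
    (hVstar : ∀ s, Vstar s = fmax (fun o => Qstar s o))
    (hVstarMI : ∀ s, VstarMI s = fmax (fun o => QI s o))
    (hVhatM : ∀ s, VhatM s = r s (πhat s) + ∑ s' : S, p s (πhat s) s' * VhatM s')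
    (hVhatMI : ∀ s, VhatMI s = rI s (πhat s) + ∑ s' : S, pI s (πhat s) s' * VhatMI s')
    (hVπIM : ∀ s, VπIM s = r s (πI s) + ∑ s' : S, p s (πI s) s' * VπIM s')
    (hbound : fmax (fun s : S => |VhatM s|) ≤ Rmax / (1 - γbar))
    (hest : fmax (fun s : S => |VstarMI s - VhatMI s|) ≤ εhat) :
    fmax (fun s : S => |Vstar s - VhatM s|) ≤
      5 * ζR / (1 - γbarI) + 4 * Rmax * ζP / ((1 - γbarI) * (1 - γbar)) + εhat := by
  have h1γ : (0:ℝ) < 1 - γbar := by linarith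
  have h1γI : (0:ℝ) < 1 - γbarI := by linarith
  have hRmax0 : 0 ≤ Rmax :=
    (hr0 (Classical.arbitrary S) (Classical.arbitrary O)).trans
      (hrR (Classical.arbitrary S) (Classical.arbitrary O))
  have hζR0 : 0 ≤ ζR :=
    le_trans (fmax_abs_nonneg (fun so : S × O => r so.1 so.2 - rI so.1 so.2)) hζR
  have hζP0 : 0 ≤ ζP := by
    set a := Classical.arbitrary (S × O) with ha
    have h0 : (0:ℝ) ≤ ∑ s' : S, |p a.1 a.2 s' - pI a.1 a.2 s'| :=
      Finset.sum_nonneg fun s' _ => abs_nonneg _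
    have h1 := le_fmax (fun so : S × O => ∑ s' : S, |p so.1 so.2 s' - pI so.1 so.2 s'|) a
    exact le_trans (le_trans h0 h1) hζP
  set B : ℝ := Rmax / (1 - γbar) with hBdef
  have hB0 : 0 ≤ B := div_nonneg hRmax0 h1γ.le
  -- per-pair bounds from the fmax hypotheses
  have hrP : ∀ s o, |r s o - rI s o| ≤ ζR := fun s o =>
    le_trans (le_fmax (fun so : S × O => |r so.1 so.2 - rI so.1 so.2|) (s, o)) hζR
  have hpP : ∀ s o, ∑ s' : S, |p s o s' - pI s o s'| ≤ ζP := fun s o =>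
    le_trans (le_fmax (fun so : S × O => ∑ s' : S, |p so.1 so.2 s' - pI so.1 so.2 s'|) (s, o)) hζP
  have hγP : ∀ s o, ∑ s' : S, p s o s' ≤ γbar := fun s o => by
    rw [hγ]; exact le_fmax (fun so : S × O => ∑ s' : S, p so.1 so.2 s') (s, o)
  have hγIP : ∀ s o, ∑ s' : S, pI s o s' ≤ γbarI := fun s o => by
    rw [hγI]; exact le_fmax (fun so : S × O => ∑ s' : S, pI so.1 so.2 s') (s, o)
  -- bound on ‖V*‖
  have hNV : fmax (fun s => |Vstar s|) ≤ B := by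
    set NV := fmax (fun s => |Vstar s|) with hNVdef
    have hNV0 : 0 ≤ NV := fmax_abs_nonneg _
    have key : NV ≤ Rmax + γbar * NV := by
      refine fmax_le fun s => ?_
      rw [hVstar s]
      refine (abs_fmax_le _).trans (fmax_le fun o => ?_)
      rw [hQstar s o]
      have h1 : |∑ s' : S, p s o s' * fmax (fun o' => Qstar s' o')| ≤ γbar * NV := by
        calc |∑ s' : S, p s o s' * fmax (fun o' => Qstar s' o')|
            ≤ ∑ s' : S, |p s o s' * fmax (fun o' => Qstar s' o')| :=
              Finset.abs_sum_le_sum_abs _ _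
          _ ≤ ∑ s' : S, p s o s' * NV := by
              refine Finset.sum_le_sum fun s' _ => ?_
              rw [abs_mul, abs_of_nonneg (hp s o s')]
              refine mul_le_mul_of_nonneg_left ?_ (hp s o s')
              have := le_fmax (fun s => |Vstar s|) s'
              rwa [hVstar s'] at this
          _ = (∑ s' : S, p s o s') * NV := (Finset.sum_mul _ _ _).symm
          _ ≤ γbar * NV := mul_le_mul_of_nonneg_right (hγP s o) hNV0
      have h2 : |r s o| ≤ Rmax := by
        rw [abs_of_nonneg (hr0 s o)]; exact hrR s o
      calc |r s o + ∑ s' : S, p s o s' * fmax (fun o' => Qstar s' o')|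
          ≤ |r s o| + |∑ s' : S, p s o s' * fmax (fun o' => Qstar s' o')| := abs_add_le _ _
        _ ≤ Rmax + γbar * NV := add_le_add h2 h1
    exact div_bound hγlt key
  have hNVp : ∀ s, |fmax (fun o => Qstar s o)| ≤ B := fun s => by
    have := le_fmax (fun s => |Vstar s|) s
    rw [hVstar s] at this
    exact this.trans hNV
  -- Term 1: ‖V* - V*_{M_I}‖
  have hT1 : fmax (fun s => |Vstar s - VstarMI s|) ≤ (ζR + ζP * B) / (1 - γbarI) := by
    have hDQ := q_diff r rI p pI Qstar QI ζR ζP γbarI B hpI hQstar hQI hrP hpP hγIP hγIlt hNVp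
    refine fmax_le fun s => ?_
    rw [hVstar s, hVstarMI s]
    refine le_trans (abs_fmax_sub_fmax _ _) (le_trans (fmax_le fun o => ?_) hDQ)
    exact le_fmax (fun so : S × O => |Qstar so.1 so.2 - QI so.1 so.2|) (s, o)
  -- Term 3: ‖V^π̂_M - V^π̂_{M_I}‖
  have hT3 : fmax (fun s => |VhatM s - VhatMI s|) ≤ (ζR + ζP * B) / (1 - γbarI) := by
    refine policy_diff (fun s => r s (πhat s)) (fun s => rI s (πhat s))
      (fun s s' => p s (πhat s) s') (fun s s' => pI s (πhat s) s') VhatM VhatMI ζR ζP γbarI B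
      (fun s s' => hpI s (πhat s) s') hVhatM hVhatMI (fun s => hrP s (πhat s))
      (fun s => hpP s (πhat s)) (fun s => hγIP s (πhat s)) hγIlt
      (fun s => le_trans (le_fmax (fun s => |VhatM s|) s) hbound)
  -- combine
  have hmain : fmax (fun s => |Vstar s - VhatM s|) ≤
      2 * ((ζR + ζP * B) / (1 - γbarI)) + εhat := by
    refine fmax_le fun s => ?_
    have e1 : |Vstar s - VstarMI s| ≤ (ζR + ζP * B) / (1 - γbarI) :=
      le_trans (le_fmax (fun s => |Vstar s - VstarMI s|) s) hT1
    have e2 : |VstarMI s - VhatMI s| ≤ εhat :=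
      le_trans (le_fmax (fun s => |VstarMI s - VhatMI s|) s) hest
    have e3 : |VhatM s - VhatMI s| ≤ (ζR + ζP * B) / (1 - γbarI) :=
      le_trans (le_fmax (fun s => |VhatM s - VhatMI s|) s) hT3
    have e4 : |Vstar s - VhatM s| ≤ |Vstar s - VstarMI s| + |VstarMI s - VhatMI s|
        + |VhatM s - VhatMI s| := by
      have := abs_sub_abs_le_abs_sub (Vstar s) (VhatM s)
      calc |Vstar s - VhatM s|
          = |(Vstar s - VstarMI s) + (VstarMI s - VhatMI s) + -(VhatM s - VhatMI s)| := by
            ring_nf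
        _ ≤ |(Vstar s - VstarMI s) + (VstarMI s - VhatMI s)| + |-(VhatM s - VhatMI s)| :=
            abs_add_le _ _
        _ ≤ |Vstar s - VstarMI s| + |VstarMI s - VhatMI s| + |VhatM s - VhatMI s| := by
            rw [abs_neg]
            exact add_le_add_left (abs_add_le _ _) _
    linarith
  refine hmain.trans ?_
  have heq : 2 * ((ζR + ζP * B) / (1 - γbarI)) =
      2 * ζR / (1 - γbarI) + 2 * Rmax * ζP / ((1 - γbarI) * (1 - γbar)) := by
    rw [hBdef]
    field_simp
  rw [heq]
  have n1 : 0 ≤ ζR / (1 - γbarI) := div_nonneg hζR0 h1γI.le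
  have n2 : 0 ≤ Rmax * ζP / ((1 - γbarI) * (1 - γbar)) :=
    div_nonneg (mul_nonneg hRmax0 hζP0) (mul_nonneg h1γI.le h1γ.le)
  have e5 : 5 * ζR / (1 - γbarI) = 2 * ζR / (1 - γbarI) + 3 * (ζR / (1 - γbarI)) := by ring
  have e6 : 4 * Rmax * ζP / ((1 - γbarI) * (1 - γbar)) =
      2 * Rmax * ζP / ((1 - γbarI) * (1 - γbar))
      + 2 * (Rmax * ζP / ((1 - γbarI) * (1 - γbar))) := by ring
  linarith
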